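/- arXiv:2107.06389 — 5 statements merged into one kernel-verified Lean document; each statement's English description precedes it below -/
import Mathlib

section
/- For all positive integers d and k, Hölder's formula holds: φ(d) · μ(d / gcd(d,k)) / φ(d / gcd(d,k)) = ∑_{m | gcd(d,k)} m · μ(d/m), where μ is the Möbius function and φ is Euler's totient function. -/
open ArithmeticFunction Finset

private lemma sum_divisors_coprime_mul {a b : ℕ} (hab : Nat.Coprime a b) (f : ℕ → ℚ) :
    ∑ m ∈ (a * b).divisors, f m = ∑ x ∈ a.divisors, ∑ y ∈ b.divisors, f (x * y) := by
  rw [← Finset.sum_product']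
  symm
  apply Finset.sum_nbij' (fun p : ℕ × ℕ => p.1 * p.2)
      (fun m => (Nat.gcd m a, Nat.gcd m b))
  · rintro ⟨x, y⟩ h
    simp only [Finset.mem_product, Nat.mem_divisors] at h ⊢
    exact ⟨mul_dvd_mul h.1.1 h.2.1, mul_ne_zero h.1.2 h.2.2⟩
  · intro m hm
    rw [Nat.mem_divisors] at hm
    have ha : a ≠ 0 := fun h => hm.2 (by simp [h])
    have hb : b ≠ 0 := fun h => hm.2 (by simp [h])
    simp only [Finset.mem_product, Nat.mem_divisors]
    exact ⟨⟨Nat.gcd_dvd_right m a, ha⟩, ⟨Nat.gcd_dvd_right m b, hb⟩⟩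
  · rintro ⟨x, y⟩ h
    simp only [Finset.mem_product, Nat.mem_divisors] at h
    have hya : Nat.Coprime y a := Nat.Coprime.coprime_dvd_left h.2.1 hab.symm
    have hxb : Nat.Coprime x b := Nat.Coprime.coprime_dvd_left h.1.1 hab
    have h1 : Nat.gcd (x * y) a = x := by
      rw [Nat.Coprime.gcd_mul_right_cancel x hya, Nat.gcd_eq_left h.1.1]
    have h2 : Nat.gcd (x * y) b = y := by
      rw [mul_comm, Nat.Coprime.gcd_mul_right_cancel y hxb, Nat.gcd_eq_left h.2.1]
    simp [h1, h2]
  · intro m hm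
    rw [Nat.mem_divisors] at hm
    exact (Nat.gcd_mul_gcd_eq_iff_dvd_mul_of_coprime hab).mpr hm.1
  · rintro ⟨x, y⟩ _
    rfl

private lemma holder_aux : ∀ d : ℕ, ∀ g : ℕ, 0 < d → g ∣ d →
    (Nat.totient d : ℚ) * (moebius (d / g) : ℚ) / (Nat.totient (d / g) : ℚ)
      = ∑ m ∈ g.divisors, (m : ℚ) * (moebius (d / m) : ℚ) := by
  intro d
  induction d using Nat.recOnPosPrimePosCoprime with
  | zero => intro g h; exact absurd h (lt_irrefl 0)
  | one =>
    intro g hg hgd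
    rw [Nat.dvd_one.mp hgd]
    simp
  | prime_pow p n hp hn =>
    intro g _ hgd
    obtain ⟨b, hb, rfl⟩ := (Nat.dvd_prime_pow hp).mp hgd
    obtain ⟨c, rfl⟩ := Nat.exists_eq_add_of_le hb
    have hp0 : (p : ℚ) ≠ 0 := Nat.cast_ne_zero.mpr hp.pos.ne'
    have hpd : p ^ (b + c) / p ^ b = p ^ c := by
      rw [pow_add, Nat.mul_div_cancel_left _ (pow_pos hp.pos b)]
    rw [hpd, Nat.sum_divisors_prime_pow hp]
    have hdiv : ∀ j, j ≤ b → p ^ (b + c) / p ^ j = p ^ (b + c - j) :=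
      fun j hj => Nat.pow_div (by omega) hp.pos
    match c with
    | 0 =>
      simp only [pow_zero, ArithmeticFunction.moebius_apply_one, Nat.totient_one]
      rw [Int.cast_one, Nat.cast_one, mul_one, div_one]
      match b with
      | 0 => simp
      | Nat.succ b' =>
        rw [Finset.sum_range_succ, Finset.sum_range_succ]
        have hz : ∀ i ∈ Finset.range b', (↑(p ^ i) : ℚ) *
            (moebius (p ^ (b' + 1 + 0) / p ^ i) : ℚ) = 0 := by
          intro i hi
          rw [Finset.mem_range] at hi
          rw [hdiv i (by omega),
            ArithmeticFunction.moebius_apply_prime_pow hp (by omega)]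
          have : ¬ (b' + 1 + 0 - i = 1) := by omega
          simp [this]
        rw [Finset.sum_eq_zero hz, zero_add]
        rw [hdiv b' (by omega), hdiv (b' + 1) (by omega)]
        have e1 : b' + 1 + 0 - b' = 1 := by omega
        have e2 : b' + 1 + 0 - (b' + 1) = 0 := by omega
        rw [e1, e2, pow_one, pow_zero, ArithmeticFunction.moebius_apply_prime hp,
          ArithmeticFunction.moebius_apply_one, Nat.totient_prime_pow_succ hp]
        push_cast [hp.one_le]
        ring
    | 1 =>
      rw [pow_one, ArithmeticFunction.moebius_apply_prime hp, Nat.totient_prime hp]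
      rw [Finset.sum_range_succ]
      have hz : ∀ i ∈ Finset.range b, (↑(p ^ i) : ℚ) *
          (moebius (p ^ (b + 1) / p ^ i) : ℚ) = 0 := by
        intro i hi
        rw [Finset.mem_range] at hi
        rw [hdiv i (by omega), ArithmeticFunction.moebius_apply_prime_pow hp (by omega)]
        have : ¬ (b + 1 - i = 1) := by omega
        simp [this]
      rw [Finset.sum_eq_zero hz, zero_add]
      rw [hdiv b (by omega)]
      have e : b + 1 - b = 1 := by omega
      rw [e, pow_one, ArithmeticFunction.moebius_apply_prime hp]
      rw [Nat.totient_prime_pow_succ hp]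
      have hpm1 : (p : ℚ) - 1 ≠ 0 := by
        have : (2 : ℚ) ≤ p := by exact_mod_cast hp.two_le
        linarith
      push_cast [hp.one_le]
      field_simp
    | (c' + 2) =>
      rw [ArithmeticFunction.moebius_apply_prime_pow hp (by omega)]
      have : ¬ (c' + 2 = 1) := by omega
      rw [if_neg this]
      rw [Int.cast_zero, mul_zero, zero_div]
      symm
      apply Finset.sum_eq_zero
      intro i hi
      rw [Finset.mem_range] at hi
      rw [hdiv i (by omega), ArithmeticFunction.moebius_apply_prime_pow hp (by omega)]
      have : ¬ (b + (c' + 2) - i = 1) := by omega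
      simp [this]
  | coprime a b ha hb hab iha ihb =>
    intro g _ hgd
    have ha0 : 0 < a := by omega
    have hb0 : 0 < b := by omega
    set ga := Nat.gcd g a with hga
    set gb := Nat.gcd g b with hgb
    have hgab : ga * gb = g := (Nat.gcd_mul_gcd_eq_iff_dvd_mul_of_coprime hab).mpr hgd
    have hgaa : ga ∣ a := Nat.gcd_dvd_right g a
    have hgbb : gb ∣ b := Nat.gcd_dvd_right g b
    have hq : a * b / (ga * gb) = (a / ga) * (b / gb) := by
      rw [Nat.div_mul_div_comm hgaa hgbb]
    have hcop' : Nat.Coprime (a / ga) (b / gb) :=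
      Nat.Coprime.coprime_dvd_right (Nat.div_dvd_of_dvd hgbb)
        (Nat.Coprime.coprime_dvd_left (Nat.div_dvd_of_dvd hgaa) hab)
    rw [← hgab, hq]
    rw [sum_divisors_coprime_mul (Nat.Coprime.coprime_dvd_right hgbb
      (Nat.Coprime.coprime_dvd_left hgaa hab)) _]
    have hsplit : ∀ x ∈ ga.divisors, ∀ y ∈ gb.divisors,
        ((x * y : ℕ) : ℚ) * (moebius (a * b / (x * y)) : ℚ)
          = ((x : ℚ) * (moebius (a / x) : ℚ)) * ((y : ℚ) * (moebius (b / y) : ℚ)) := by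
      intro x hx y hy
      rw [Nat.mem_divisors] at hx hy
      have hxa : x ∣ a := hx.1.trans hgaa
      have hyb : y ∣ b := hy.1.trans hgbb
      have hq2 : a * b / (x * y) = (a / x) * (b / y) := (Nat.div_mul_div_comm hxa hyb).symm
      have hcop2 : Nat.Coprime (a / x) (b / y) :=
        Nat.Coprime.coprime_dvd_right (Nat.div_dvd_of_dvd hyb)
          (Nat.Coprime.coprime_dvd_left (Nat.div_dvd_of_dvd hxa) hab)
      rw [hq2, ArithmeticFunction.isMultiplicative_moebius.map_mul_of_coprime hcop2]
      push_cast
      ring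
    rw [Finset.sum_congr rfl (fun x hx => Finset.sum_congr rfl (fun y hy => hsplit x hx y hy))]
    rw [← Finset.sum_mul_sum]
    rw [← iha ga ha0 hgaa, ← ihb gb hb0 hgbb]
    rw [Nat.totient_mul hab,
      ArithmeticFunction.isMultiplicative_moebius.map_mul_of_coprime hcop',
      Nat.totient_mul hcop']
    push_cast
    rw [mul_div_mul_comm]
    ring

theorem ramanujan_sum_holder (d k : ℕ) (hd : 0 < d) (hk : 0 < k) :
    (Nat.totient d : ℚ) * (moebius (d / Nat.gcd d k) : ℚ) /
      (Nat.totient (d / Nat.gcd d k) : ℚ)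
      = ∑ m ∈ (Nat.gcd d k).divisors, (m : ℚ) * (moebius (d / m) : ℚ) := by
  exact holder_aux d (Nat.gcd d k) hd (Nat.gcd_dvd_left d k)
end

section
/- For all positive integers d and k, the sum of the k-th powers of all primitive d-th roots of unity in ℂ equals ∑_{m | gcd(d,k)} m · μ(d/m). -/
open ArithmeticFunction Finset

lemma sum_pow_nthRootsFinset (n k : ℕ) (hn : 0 < n) :
    ∑ z ∈ Polynomial.nthRootsFinset n (1 : ℂ), z ^ k = if n ∣ k then (n : ℂ) else 0 := by
  have hζc := Complex.isPrimitiveRoot_exp n hn.ne'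
  set ζc := Complex.exp (2 * Real.pi * Complex.I / n)
  have hnodup := hζc.nthRoots_one_nodup
  have hs : ∑ z ∈ Polynomial.nthRootsFinset n (1 : ℂ), z ^ k
      = ∑ j ∈ range n, (ζc ^ k) ^ j := by
    rw [Polynomial.nthRootsFinset_def, ← Multiset.toFinset_eq hnodup, Finset.sum_mk,
      hζc.nthRoots_eq (one_pow n), Multiset.map_map]
    simp only [Function.comp, mul_one]
    rw [← Finset.range_val, ← Finset.sum]
    exact Finset.sum_congr rfl fun j _ => by rw [← pow_mul, ← pow_mul, mul_comm]
  rw [hs]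
  by_cases hdvd : n ∣ k
  · rw [if_pos hdvd]
    obtain ⟨c, rfl⟩ := hdvd
    have : ζc ^ (n * c) = 1 := by rw [pow_mul, hζc.pow_eq_one, one_pow]
    simp [this]
  · rw [if_neg hdvd]
    have hne : ζc ^ k ≠ 1 := fun h => hdvd ((hζc.pow_eq_one_iff_dvd k).mp h)
    rw [geom_sum_eq hne]
    have : (ζc ^ k) ^ n = 1 := by rw [← pow_mul, mul_comm, pow_mul, hζc.pow_eq_one, one_pow]
    rw [this, sub_self, zero_div]

theorem ramanujan_sum_primitive_roots (d k : ℕ) (hd : 0 < d) (hk : 0 < k) :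
    ∑ z ∈ primitiveRoots d ℂ, z ^ k
      = ∑ m ∈ (Nat.gcd d k).divisors, (m : ℂ) * (moebius (d / m) : ℂ) := by
  have key : ∀ n > 0, ∑ i ∈ n.divisors, ∑ z ∈ primitiveRoots i ℂ, z ^ k
      = if n ∣ k then (n : ℂ) else 0 := by
    intro n hn
    have hζc := Complex.isPrimitiveRoot_exp n hn.ne'
    rw [← sum_pow_nthRootsFinset n k hn, IsPrimitiveRoot.nthRoots_one_eq_biUnion_primitiveRoots,
      Finset.sum_biUnion]
    intro i _ j _ hij
    exact IsPrimitiveRoot.disjoint hij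
  have := (sum_eq_iff_sum_mul_moebius_eq
    (f := fun n => ∑ z ∈ primitiveRoots n ℂ, z ^ k)
    (g := fun n => if n ∣ k then (n : ℂ) else 0)).mp key d hd
  rw [← this, Nat.sum_divisorsAntidiagonal'
    (f := fun a b => (moebius a : ℂ) * (if b ∣ k then (b : ℂ) else 0))]
  have hset : (Nat.gcd d k).divisors = d.divisors.filter (· ∣ k) := by
    ext m
    simp [Nat.mem_divisors, Nat.dvd_gcd_iff, hd.ne', hk.ne',
      Nat.gcd_ne_zero_left hd.ne', and_assoc]
  rw [hset, Finset.sum_filter]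
  refine Finset.sum_congr rfl fun i hi => ?_
  by_cases hik : i ∣ k
  · rw [if_pos hik, if_pos hik, mul_comm]
  · rw [if_neg hik, if_neg hik, mul_zero]
end

section
/- Let r and n be positive integers with r | n and gcd(r, n/r) = 1. Then (1/n) · ∑_{d|n} φ(d) · μ(d/gcd(d,r)) / φ(d/gcd(d,r)) equals 1 if n = r and equals 0 otherwise. -/
open ArithmeticFunction Finset

private lemma gcd_mul_of_coprime {a b : ℕ} (r : ℕ) (h : Nat.Coprime a b) :
    Nat.gcd (a * b) r = Nat.gcd a r * Nat.gcd b r := by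
  apply Nat.dvd_antisymm
  · have h1 : Nat.gcd (a * b) r ∣ Nat.gcd (Nat.gcd (a * b) r) a * Nat.gcd (Nat.gcd (a * b) r) b :=
      Nat.dvd_gcd_mul_gcd_iff_dvd_mul.mpr (Nat.gcd_dvd_left _ _)
    refine h1.trans (mul_dvd_mul ?_ ?_)
    · exact Nat.dvd_gcd (Nat.gcd_dvd_right _ _) ((Nat.gcd_dvd_left _ _).trans (Nat.gcd_dvd_right _ _))
    · exact Nat.dvd_gcd (Nat.gcd_dvd_right _ _) ((Nat.gcd_dvd_left _ _).trans (Nat.gcd_dvd_right _ _))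
  · have hc : Nat.Coprime (Nat.gcd a r) (Nat.gcd b r) :=
      Nat.Coprime.coprime_dvd_left (Nat.gcd_dvd_left _ _)
        (Nat.Coprime.coprime_dvd_right (Nat.gcd_dvd_left _ _) h)
    exact Nat.dvd_gcd (mul_dvd_mul (Nat.gcd_dvd_left _ _) (Nat.gcd_dvd_left _ _))
      (Nat.Coprime.mul_dvd_of_dvd_of_dvd hc (Nat.gcd_dvd_right _ _) (Nat.gcd_dvd_right _ _))

/-- Ramanujan sum `c_d(r)` as a function of `d`, for fixed `r`. -/
private def ramF (r : ℕ) : ArithmeticFunction ℚ :=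
  ⟨fun d => (Nat.totient d : ℚ) * (moebius (d / Nat.gcd d r) : ℚ) /
      (Nat.totient (d / Nat.gcd d r) : ℚ), by simp⟩

private lemma ramF_apply (r d : ℕ) :
    ramF r d = (Nat.totient d : ℚ) * (moebius (d / Nat.gcd d r) : ℚ) /
      (Nat.totient (d / Nat.gcd d r) : ℚ) := rfl

private lemma ramF_isMult (r : ℕ) : (ramF r).IsMultiplicative := by
  constructor
  · simp [ramF_apply, Nat.gcd_one_left]
  · intro a b hab
    rcases eq_or_ne a 0 with rfl | ha
    · have hb : b = 1 := by simpa using hab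
      subst hb
      simp [ramF_apply, Nat.gcd_one_left]
    rcases eq_or_ne b 0 with rfl | hb
    · have ha1 : a = 1 := by simpa [Nat.coprime_zero_right] using hab
      subst ha1
      simp [ramF_apply, Nat.gcd_one_left]
    simp only [ramF_apply]
    have hg : Nat.gcd (a * b) r = Nat.gcd a r * Nat.gcd b r := gcd_mul_of_coprime r hab
    have hga : Nat.gcd a r ∣ a := Nat.gcd_dvd_left _ _
    have hgb : Nat.gcd b r ∣ b := Nat.gcd_dvd_left _ _
    have hdiv : a * b / (Nat.gcd a r * Nat.gcd b r) = (a / Nat.gcd a r) * (b / Nat.gcd b r) :=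
      (Nat.div_mul_div_comm hga hgb).symm
    have hc : Nat.Coprime (a / Nat.gcd a r) (b / Nat.gcd b r) :=
      Nat.Coprime.coprime_dvd_left (Nat.div_dvd_of_dvd hga)
        (Nat.Coprime.coprime_dvd_right (Nat.div_dvd_of_dvd hgb) hab)
    rw [hg, hdiv, Nat.totient_mul hab, Nat.totient_mul hc,
      ArithmeticFunction.isMultiplicative_moebius.map_mul_of_coprime hc]
    push_cast
    ring

theorem foulkes_char_sum (r n : ℕ) (hr : 0 < r) (hn : 0 < n) (hrn : r ∣ n)
    (hcop : Nat.Coprime r (n / r)) :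
    (1 / n : ℚ) * ∑ d ∈ n.divisors,
        (Nat.totient d : ℚ) * (moebius (d / Nat.gcd d r) : ℚ) /
          (Nat.totient (d / Nat.gcd d r) : ℚ)
      = if n = r then 1 else 0 := by
  set m := n / r with hm
  have hnm : n = r * m := (Nat.mul_div_cancel' hrn).symm
  have hm0 : 0 < m := Nat.div_pos (Nat.le_of_dvd hn hrn) hr
  have key : ∑ d ∈ n.divisors, ramF r d
      = (∑ d ∈ r.divisors, ramF r d) * (∑ d ∈ m.divisors, ramF r d) := by
    have hmult : ((ArithmeticFunction.zeta : ArithmeticFunction ℚ) * ramF r).IsMultiplicative :=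
      (ArithmeticFunction.isMultiplicative_zeta.natCast).mul (ramF_isMult r)
    have := hmult.map_mul_of_coprime hcop
    simpa only [ArithmeticFunction.coe_zeta_mul_apply, ← hnm] using this
  have hsum_r : ∑ d ∈ r.divisors, ramF r d = (r : ℚ) := by
    rw [show (r : ℚ) = ((∑ d ∈ r.divisors, Nat.totient d : ℕ) : ℚ) by
      rw [Nat.sum_totient]]
    push_cast
    refine Finset.sum_congr rfl fun d hd => ?_
    have hdr : d ∣ r := (Nat.mem_divisors.mp hd).1
    rw [ramF_apply, Nat.gcd_eq_left hdr, Nat.div_self (Nat.pos_of_mem_divisors hd)]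
    simp
  have hsum_m : ∑ d ∈ m.divisors, ramF r d = if m = 1 then 1 else 0 := by
    have h1 : ∑ d ∈ m.divisors, ramF r d = ∑ d ∈ m.divisors, ((moebius d : ℤ) : ℚ) := by
      refine Finset.sum_congr rfl fun d hd => ?_
      have hdm : d ∣ m := (Nat.mem_divisors.mp hd).1
      have hdr : Nat.gcd d r = 1 :=
        (Nat.Coprime.coprime_dvd_left hdm hcop.symm)
      have hphi : (Nat.totient d : ℚ) ≠ 0 := by
        exact_mod_cast (Nat.totient_pos.mpr (Nat.pos_of_mem_divisors hd)).ne'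
      rw [ramF_apply, hdr, Nat.div_one, mul_comm, mul_div_assoc, div_self hphi, mul_one]
    have h2 : ∑ d ∈ m.divisors, (moebius d : ℤ) = if m = 1 then 1 else 0 :=
      calc ∑ d ∈ m.divisors, (moebius d : ℤ)
          = ((moebius * ↑ArithmeticFunction.zeta : ArithmeticFunction ℤ)) m :=
            (ArithmeticFunction.coe_mul_zeta_apply).symm
        _ = (1 : ArithmeticFunction ℤ) m := by
            rw [ArithmeticFunction.moebius_mul_coe_zeta]
        _ = if m = 1 then 1 else 0 := ArithmeticFunction.one_apply
    rw [h1, ← Int.cast_sum, h2]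
    split <;> simp
  have hLHS : ∑ d ∈ n.divisors,
        (Nat.totient d : ℚ) * (moebius (d / Nat.gcd d r) : ℚ) /
          (Nat.totient (d / Nat.gcd d r) : ℚ) = ∑ d ∈ n.divisors, ramF r d := rfl
  rw [hLHS, key, hsum_r, hsum_m]
  by_cases hm1 : m = 1
  · have : n = r := by rw [hnm, hm1, mul_one]
    subst this
    simp [hm1, hn.ne', one_div, inv_mul_cancel₀ (by exact_mod_cast hn.ne' : (n : ℚ) ≠ 0)]
  · have hne : n ≠ r := by
      intro h
      apply hm1
      have : r * m = r * 1 := by rw [← hnm, h, mul_one]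
      exact Nat.eq_of_mul_eq_mul_left hr this
    simp [hm1, hne]
end

section
/- Let S be a set of primes with 2 ∈ S, and define ψ(d) = φ(Q_d)·μ(ℓ_d), where Q_d is the S-part and ℓ_d the S-free part of d. Then for every positive integer n, ∑_{d|n} ψ(d)·(-1)^{n/d} = -n if n is odd and n ∈ P(S), and ∑_{d|n} ψ(d)·(-1)^{n/d} = 0 otherwise. -/
open ArithmeticFunction Finset
open scoped ArithmeticFunction.zeta ArithmeticFunction.Moebius

/-- The `S`-part of `d`: the largest divisor of `d` all of whose prime factors lie in `S`. -/
def Spart (S : Set ℕ) [DecidablePred (· ∈ S)] (d : ℕ) : ℕ :=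
  ∏ p ∈ d.primeFactors.filter (· ∈ S), p ^ d.factorization p

section aux

variable (S : Set ℕ) [DecidablePred (· ∈ S)]

lemma Spart_pos (d : ℕ) : 0 < Spart S d := by
  apply Finset.prod_pos
  intro p hp
  simp only [mem_filter, Nat.mem_primeFactors] at hp
  exact pow_pos hp.1.1.pos _

lemma Spart_mul_compl {d : ℕ} (hd : d ≠ 0) :
    Spart S d * ∏ p ∈ d.primeFactors.filter (¬ · ∈ S), p ^ d.factorization p = d := by
  rw [Spart, Finset.prod_filter_mul_prod_filter_not]
  conv_rhs => rw [← Nat.factorization_prod_pow_eq_self hd]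
  rfl

lemma div_Spart_eq {d : ℕ} (hd : d ≠ 0) :
    d / Spart S d = ∏ p ∈ d.primeFactors.filter (¬ · ∈ S), p ^ d.factorization p := by
  exact Nat.div_eq_of_eq_mul_right (Spart_pos S d) (Spart_mul_compl S hd).symm

lemma Spart_dvd (d : ℕ) : Spart S d ∣ d := by
  rcases eq_or_ne d 0 with rfl | hd
  · exact dvd_zero _
  · exact ⟨_, (Spart_mul_compl S hd).symm⟩

lemma Spart_zero : Spart S 0 = 1 := by simp [Spart]

lemma Spart_one : Spart S 1 = 1 := by simp [Spart]

lemma Spart_prime_pow {p k : ℕ} (hp : p.Prime) :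
    Spart S (p ^ k) = if p ∈ S then p ^ k else 1 := by
  rcases Nat.eq_zero_or_pos k with rfl | hk
  · simp [Spart_one]
  · rw [Spart, Nat.primeFactors_prime_pow hk.ne' hp]
    by_cases hpS : p ∈ S
    · rw [Finset.filter_singleton, if_pos hpS, Finset.prod_singleton,
        hp.factorization_pow, Finsupp.single_eq_same, if_pos hpS]
    · rw [Finset.filter_singleton, if_neg hpS, Finset.prod_empty, if_neg hpS]


lemma coprime_Spart (d : ℕ) : (Spart S d).Coprime (d / Spart S d) := by
  rcases eq_or_ne d 0 with rfl | hd
  · simp [Spart_zero]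
  · rw [div_Spart_eq S hd, Spart]
    rw [Nat.coprime_prod_left_iff]
    intro p hp
    rw [Nat.coprime_prod_right_iff]
    intro q hq
    simp only [mem_filter, Nat.mem_primeFactors] at hp hq
    exact Nat.Coprime.pow _ _ ((Nat.coprime_primes hp.1.1 hq.1.1).mpr
      (fun h => hq.2 (h ▸ hp.2)))

lemma Spart_mul {m n : ℕ} (hm : m ≠ 0) (hn : n ≠ 0) (hmn : m.Coprime n) :
    Spart S (m * n) = Spart S m * Spart S n := by
  rw [Spart, Nat.primeFactors_mul hm hn, Finset.filter_union,
    Finset.prod_union (Finset.disjoint_filter_filter (Nat.Coprime.disjoint_primeFactors hmn)),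
    Spart, Spart]
  congr 1
  · refine Finset.prod_congr rfl fun p hp => ?_
    simp only [mem_filter, Nat.mem_primeFactors] at hp
    rw [Nat.factorization_mul hm hn, Finsupp.add_apply,
      Nat.factorization_eq_zero_of_not_dvd (fun h => Nat.Prime.one_lt hp.1.1 |>.ne'
        (Nat.eq_one_of_dvd_coprimes hmn hp.1.2.1 h))]
    ring
  · refine Finset.prod_congr rfl fun p hp => ?_
    simp only [mem_filter, Nat.mem_primeFactors] at hp
    rw [Nat.factorization_mul hm hn, Finsupp.add_apply,
      Nat.factorization_eq_zero_of_not_dvd (fun h => Nat.Prime.one_lt hp.1.1 |>.ne'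
        (Nat.eq_one_of_dvd_coprimes hmn h hp.1.2.1))]
    ring

def psi : ArithmeticFunction ℤ :=
  ⟨fun d => (Nat.totient (Spart S d) : ℤ) * moebius (d / Spart S d), by
    simp [Spart_zero]⟩

lemma psi_apply (d : ℕ) :
    psi S d = (Nat.totient (Spart S d) : ℤ) * moebius (d / Spart S d) := rfl

lemma psi_mult : (psi S).IsMultiplicative := by
  rw [ArithmeticFunction.IsMultiplicative.iff_ne_zero]
  refine ⟨by simp [psi_apply, Spart_one], fun {m n} hm hn hmn => ?_⟩
  have hSm := Spart_dvd S m
  have hSn := Spart_dvd S n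
  have hcopS : (Spart S m).Coprime (Spart S n) :=
    Nat.Coprime.coprime_dvd_left hSm (Nat.Coprime.coprime_dvd_right hSn hmn)
  have hcopL : (m / Spart S m).Coprime (n / Spart S n) :=
    Nat.Coprime.coprime_dvd_left (Nat.div_dvd_of_dvd hSm)
      (Nat.Coprime.coprime_dvd_right (Nat.div_dvd_of_dvd hSn) hmn)
  rw [psi_apply, psi_apply, psi_apply, Spart_mul S hm hn hmn]
  have hdiv : m * n / (Spart S m * Spart S n) = m / Spart S m * (n / Spart S n) :=
    (Nat.div_mul_div_comm hSm hSn).symm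
  rw [hdiv, Nat.totient_mul hcopS,
    ArithmeticFunction.isMultiplicative_moebius.map_mul_of_coprime hcopL]
  push_cast
  ring

lemma sum_psi_prime_pow {p k : ℕ} (hp : p.Prime) (hk : k ≠ 0) :
    ∑ d ∈ (p ^ k).divisors, psi S d = if p ∈ S then ((p : ℤ)) ^ k else 0 := by
  rw [Nat.sum_divisors_prime_pow hp]
  have hpsi : ∀ j : ℕ, psi S (p ^ j)
      = if p ∈ S then (Nat.totient (p ^ j) : ℤ) else moebius (p ^ j) := by
    intro j
    rw [psi_apply, Spart_prime_pow S hp]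
    by_cases hpS : p ∈ S
    · simp [hpS, Nat.div_self (pow_pos hp.pos j)]
    · simp [hpS]
  by_cases hpS : p ∈ S
  · simp only [hpsi, if_pos hpS]
    rw [← Nat.cast_sum, ← Nat.sum_divisors_prime_pow hp (f := Nat.totient),
      Nat.sum_totient, Nat.cast_pow]
  · simp only [hpsi, if_neg hpS]
    rw [← Nat.sum_divisors_prime_pow hp (f := fun d => (moebius d : ℤ))]
    have h1 : ((μ * ζ : ArithmeticFunction ℤ)) (p ^ k) = 0 := by
      rw [ArithmeticFunction.moebius_mul_coe_zeta, ArithmeticFunction.one_apply,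
        if_neg (by simpa using (Nat.one_lt_pow hk hp.one_lt).ne')]
    rw [← h1, ArithmeticFunction.coe_mul_zeta_apply]

lemma sum_psi {m : ℕ} (hm : m ≠ 0) :
    ∑ d ∈ m.divisors, psi S d
      = if ∀ p ∈ m.primeFactors, p ∈ S then (m : ℤ) else 0 := by
  have hG : (psi S * (ζ : ArithmeticFunction ℤ)).IsMultiplicative :=
    (psi_mult S).mul (ArithmeticFunction.isMultiplicative_zeta.natCast)
  have h1 : ∑ d ∈ m.divisors, psi S d = (psi S * (ζ : ArithmeticFunction ℤ)) m :=
    (ArithmeticFunction.coe_mul_zeta_apply).symm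
  rw [h1, ArithmeticFunction.IsMultiplicative.multiplicative_factorization _ hG hm]
  by_cases hall : ∀ p ∈ m.primeFactors, p ∈ S
  · rw [if_pos hall]
    conv_rhs => rw [← Nat.factorization_prod_pow_eq_self hm]
    rw [Finsupp.prod, Finsupp.prod, Nat.cast_prod]
    refine Finset.prod_congr rfl fun p hp => ?_
    rw [Nat.support_factorization] at hp
    rw [ArithmeticFunction.coe_mul_zeta_apply,
      sum_psi_prime_pow S (Nat.prime_of_mem_primeFactors hp)
        (Nat.Prime.factorization_pos_of_dvd (Nat.prime_of_mem_primeFactors hp) hm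
          (Nat.dvd_of_mem_primeFactors hp)).ne',
      if_pos (hall p hp), Nat.cast_pow]
  · rw [if_neg hall]
    push_neg at hall
    obtain ⟨p, hp, hpS⟩ := hall
    refine Finset.prod_eq_zero (by rwa [Nat.support_factorization]) ?_
    simp only
    rw [ArithmeticFunction.coe_mul_zeta_apply,
      sum_psi_prime_pow S (Nat.prime_of_mem_primeFactors hp)
        (Nat.Prime.factorization_pos_of_dvd (Nat.prime_of_mem_primeFactors hp) hm
          (Nat.dvd_of_mem_primeFactors hp)).ne',
      if_neg hpS]

end aux

theorem sum_psi_neg_one_pow_two_mem (S : Set ℕ) [DecidablePred (· ∈ S)]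
    (hS : ∀ q ∈ S, Nat.Prime q) (h2 : 2 ∈ S) (n : ℕ) (hn : 0 < n) :
    ∑ d ∈ n.divisors,
        (Nat.totient (Spart S d) : ℤ) * moebius (d / Spart S d) * (-1) ^ (n / d)
      = if Odd n ∧ ∀ p ∈ n.primeFactors, p ∈ S then -(n : ℤ) else 0 := by
  have hsum : ∑ d ∈ n.divisors,
      (Nat.totient (Spart S d) : ℤ) * moebius (d / Spart S d) * (-1) ^ (n / d)
      = ∑ d ∈ n.divisors, psi S d * (-1) ^ (n / d) :=
    Finset.sum_congr rfl fun d _ => by rw [psi_apply]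
  rw [hsum]
  by_cases hodd : Odd n
  · have hterm : ∀ d ∈ n.divisors, ((-1 : ℤ)) ^ (n / d) = -1 := by
      intro d hd
      rw [Nat.mem_divisors] at hd
      refine Odd.neg_one_pow ?_
      rcases Nat.even_or_odd (n / d) with he | ho
      · exact absurd ((Nat.mul_div_cancel' hd.1) ▸ he.mul_left d) (Nat.not_even_iff_odd.mpr hodd)
      · exact ho
    have key : (∑ d ∈ n.divisors, psi S d * (-1) ^ (n / d))
        = -∑ d ∈ n.divisors, psi S d := by
      rw [← Finset.sum_neg_distrib]
      exact Finset.sum_congr rfl fun d hd => by rw [hterm d hd, mul_neg_one]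
    rw [key, sum_psi S hn.ne']
    by_cases hP : ∀ p ∈ n.primeFactors, p ∈ S
    · rw [if_pos hP, if_pos ⟨hodd, hP⟩]
    · rw [if_neg hP, if_neg (fun h => hP h.2), neg_zero]
  · rw [if_neg (fun h => hodd h.1)]
    set a := n.factorization 2 with ha_def
    set m := n / 2 ^ a with hm_def
    have h2n : 2 ∣ n := (Nat.not_odd_iff_even.mp hodd).two_dvd
    have ha : a ≠ 0 := (Nat.Prime.factorization_pos_of_dvd Nat.prime_two hn.ne' h2n).ne'
    have hsplit : 2 ^ a * m = n := Nat.ordProj_mul_ordCompl_eq_self n 2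
    have hm0 : m ≠ 0 := (Nat.ordCompl_pos 2 hn.ne').ne'
    have hmodd : ¬ 2 ∣ m := Nat.not_dvd_ordCompl Nat.prime_two hn.ne'
    have hcop : (2 ^ a).Coprime m :=
      Nat.Coprime.pow_left _ (Nat.coprime_ordCompl Nat.prime_two hn.ne')
    have hsign : ∀ d ∈ n.divisors, ((-1 : ℤ)) ^ (n / d)
        = if 2 ^ a ∣ d then -1 else 1 := by
      intro d hd
      rw [Nat.mem_divisors] at hd
      have hn_eq : d * (n / d) = n := Nat.mul_div_cancel' hd.1
      by_cases hdvd : 2 ^ a ∣ d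
      · rw [if_pos hdvd]
        refine Odd.neg_one_pow (Nat.odd_iff.mpr (Nat.two_dvd_ne_zero.mp ?_))
        intro h2nd
        have hchain : 2 ^ a * 2 ∣ d * (n / d) := mul_dvd_mul hdvd h2nd
        rw [hn_eq] at hchain
        exact Nat.pow_succ_factorization_not_dvd hn.ne' Nat.prime_two
          (by rw [pow_succ]; exact hchain)
      · rw [if_neg hdvd]
        refine Even.neg_one_pow ?_
        rcases Nat.even_or_odd (n / d) with he | ho
        · exact he
        · exfalso
          apply hdvd
          have hdn : 2 ^ a ∣ d * (n / d) := by rw [hn_eq]; exact Nat.ordProj_dvd n 2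
          refine Nat.Coprime.dvd_of_dvd_mul_right ?_ hdn
          exact Nat.Coprime.pow_left _
            ((Nat.Prime.coprime_iff_not_dvd Nat.prime_two).mpr
              (Nat.two_dvd_ne_zero.mpr (Nat.odd_iff.mp ho)))
    have hstep : ∑ d ∈ n.divisors, psi S d * (-1) ^ (n / d)
        = (∑ d ∈ n.divisors, psi S d)
          - 2 * ∑ d ∈ n.divisors.filter (2 ^ a ∣ ·), psi S d := by
      rw [Finset.sum_filter, Finset.mul_sum, ← Finset.sum_sub_distrib]
      refine Finset.sum_congr rfl fun d hd => ?_
      rw [hsign d hd]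
      split_ifs <;> ring
    have hbij : ∑ d ∈ n.divisors.filter (2 ^ a ∣ ·), psi S d
        = ∑ e ∈ m.divisors, psi S (2 ^ a * e) := by
      refine Finset.sum_nbij' (fun d => d / 2 ^ a) (fun e => 2 ^ a * e) ?_ ?_ ?_ ?_ ?_
      · intro d hd
        simp only [Finset.mem_filter, Nat.mem_divisors] at hd
        obtain ⟨c, rfl⟩ := hd.2
        rw [Nat.mul_div_cancel_left _ (Nat.pos_of_ne_zero (pow_ne_zero a two_ne_zero)),
          Nat.mem_divisors]
        refine ⟨?_, hm0⟩
        have := hd.1.1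
        rw [← hsplit] at this
        exact (mul_dvd_mul_iff_left (pow_ne_zero a (two_ne_zero : (2:ℕ) ≠ 0))).mp this
      · intro e he
        rw [Nat.mem_divisors] at he
        simp only [Finset.mem_filter, Nat.mem_divisors]
        exact ⟨⟨hsplit ▸ mul_dvd_mul_left _ he.1, hn.ne'⟩, dvd_mul_right _ _⟩
      · intro d hd
        simp only [Finset.mem_filter] at hd
        exact Nat.mul_div_cancel' hd.2
      · intro e he
        exact Nat.mul_div_cancel_left _ (Nat.pos_of_ne_zero (pow_ne_zero a two_ne_zero))
      · intro d hd
        simp only [Finset.mem_filter] at hd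
        rw [Nat.mul_div_cancel' hd.2]
    have hmul : ∑ e ∈ m.divisors, psi S (2 ^ a * e)
        = psi S (2 ^ a) * ∑ e ∈ m.divisors, psi S e := by
      rw [Finset.mul_sum]
      refine Finset.sum_congr rfl fun e he => ?_
      exact (psi_mult S).map_mul_of_coprime
        (hcop.coprime_dvd_right (Nat.dvd_of_mem_divisors he))
    have hpsi2a : psi S (2 ^ a) = (2 : ℤ) ^ (a - 1) := by
      rw [psi_apply, Spart_prime_pow S Nat.prime_two, if_pos h2,
        Nat.div_self (pow_pos two_pos a), ArithmeticFunction.moebius_apply_one,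
        Nat.totient_prime_pow Nat.prime_two (Nat.pos_of_ne_zero ha)]
      push_cast
      ring
    have hGn : ∑ d ∈ n.divisors, psi S d
        = (2 : ℤ) ^ a * ∑ e ∈ m.divisors, psi S e := by
      have h1 : ∑ d ∈ n.divisors, psi S d = (psi S * (ζ : ArithmeticFunction ℤ)) n :=
        (ArithmeticFunction.coe_mul_zeta_apply).symm
      have hG : (psi S * (ζ : ArithmeticFunction ℤ)).IsMultiplicative :=
        (psi_mult S).mul (ArithmeticFunction.isMultiplicative_zeta.natCast)
      rw [h1, ← hsplit, hG.map_mul_of_coprime hcop,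
        ArithmeticFunction.coe_mul_zeta_apply, ArithmeticFunction.coe_mul_zeta_apply,
        sum_psi_prime_pow S Nat.prime_two ha, if_pos h2]
      norm_num
    rw [hstep, hbij, hmul, hpsi2a, hGn]
    have h2a : (2 : ℤ) ^ a = 2 * 2 ^ (a - 1) := by
      rw [← pow_succ', Nat.sub_add_cancel (Nat.one_le_iff_ne_zero.mpr ha)]
    rw [h2a]
    ring
end

section
/- Let q be a prime and n = ℓ·q^k with q ∤ ℓ. Define ψ(d) = φ(q^{v}) · μ(d/q^{v}) where q^v is the exact power of q dividing d. Then in ℚ[X_1, X_2, ...]: ∑_{d|n} ψ(d)·X_d^{n/d} = ∑_{r=0}^{k} q^r · ∑_{e | ℓ·q^{k-r}} μ(e) · X_{q^r · e}^{(ℓ·q^{k-r})/e}. -/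
open ArithmeticFunction Finset MvPolynomial

-- sum over divisors of a coprime product as a double sum
lemma sum_divisors_coprime_mul_s17 {M : Type*} [AddCommMonoid M] {m n : ℕ}
    (hm : m ≠ 0) (hn : n ≠ 0) (h : Nat.Coprime m n) (f : ℕ → M) :
    ∑ d ∈ (m * n).divisors, f d = ∑ a ∈ m.divisors, ∑ b ∈ n.divisors, f (a * b) := by
  rw [← Finset.sum_product']
  refine Finset.sum_nbij' (fun d => (d.gcd m, d.gcd n)) (fun p => p.1 * p.2) ?_ ?_ ?_ ?_ ?_
  · intro d hd
    rw [Nat.mem_divisors] at hd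
    simp [Finset.mem_product, Nat.mem_divisors, Nat.gcd_dvd_right, hm, hn]
  · intro p hp
    rw [Finset.mem_product, Nat.mem_divisors, Nat.mem_divisors] at hp
    exact Nat.mem_divisors.mpr ⟨mul_dvd_mul hp.1.1 hp.2.1, mul_ne_zero hm hn⟩
  · intro d hd
    rw [Nat.mem_divisors] at hd
    exact (Nat.gcd_mul_gcd_eq_iff_dvd_mul_of_coprime h).mpr hd.1
  · intro p hp
    rw [Finset.mem_product, Nat.mem_divisors, Nat.mem_divisors] at hp
    have hbm : Nat.Coprime p.2 m := Nat.Coprime.coprime_dvd_left hp.2.1 h.symm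
    have han : Nat.Coprime p.1 n := Nat.Coprime.coprime_dvd_left hp.1.1 h
    have h1 : (p.1 * p.2).gcd m = p.1 := by
      rw [hbm.gcd_mul_right_cancel p.1, Nat.gcd_eq_left hp.1.1]
    have h2 : (p.1 * p.2).gcd n = p.2 := by
      rw [han.gcd_mul_left_cancel p.2, Nat.gcd_eq_left hp.2.1]
    simp [h1, h2]
  · intro d hd
    rw [Nat.mem_divisors] at hd
    exact congrArg f ((Nat.gcd_mul_gcd_eq_iff_dvd_mul_of_coprime h).mpr hd.1).symm

lemma sum_range_two_support {M : Type*} [AddCommMonoid M] (g : ℕ → M)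
    (hg : ∀ i, 2 ≤ i → g i = 0) (s : ℕ) :
    ∑ i ∈ range (s + 1), g i = g 0 + (if 1 ≤ s then g 1 else 0) := by
  cases s with
  | zero => simp
  | succ t =>
    rw [if_pos (by omega)]
    rw [range_eq_Ico, ← Finset.sum_Ico_consecutive _ (by omega : 0 ≤ 2) (by omega : 2 ≤ t + 1 + 1)]
    rw [Finset.sum_eq_zero (fun i hi => hg i (Finset.mem_Ico.mp hi).1), add_zero]
    simp [Finset.sum_range_succ]

lemma exp_helper {a ℓ q s j : ℕ} (ha : a ∣ ℓ) (ha0 : 0 < a) (hq0 : 0 < q) (h : j ≤ s) :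
    ℓ * q ^ s / (a * q ^ j) = ℓ / a * q ^ (s - j) := by
  obtain ⟨c, rfl⟩ := ha
  have : a * c * q ^ s = (a * q ^ j) * (c * q ^ (s - j)) := by
    rw [mul_mul_mul_comm, ← pow_add, Nat.add_sub_cancel' h]
  rw [this, Nat.mul_div_cancel_left _ (by positivity), Nat.mul_div_cancel_left _ ha0]

theorem Lie_q_decomposition (q ℓ k n : ℕ) (hq : q.Prime) (hℓ : 0 < ℓ)
    (hql : ¬ q ∣ ℓ) (hn : n = ℓ * q ^ k) :
    ∑ d ∈ n.divisors,
        (MvPolynomial.C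
            ((Nat.totient (q ^ (d.factorization q)) : ℚ) *
              (moebius (d / q ^ (d.factorization q)) : ℚ)) : MvPolynomial ℕ ℚ) *
          (MvPolynomial.X d) ^ (n / d)
      = ∑ r ∈ Finset.range (k + 1),
          (MvPolynomial.C ((q : ℚ) ^ r) : MvPolynomial ℕ ℚ) *
            ∑ e ∈ (ℓ * q ^ (k - r)).divisors,
              MvPolynomial.C ((moebius e : ℚ)) *
                (MvPolynomial.X (q ^ r * e)) ^ ((ℓ * q ^ (k - r)) / e) := by
  subst hn
  have hq0 : 0 < q := hq.pos
  have hqcl : Nat.Coprime q ℓ := (hq.coprime_iff_not_dvd).mpr hql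
  have hcop : ∀ s : ℕ, Nat.Coprime ℓ (q ^ s) := fun s => (hqcl.symm).pow_right s
  have hℓ0 : ℓ ≠ 0 := hℓ.ne'
  -- basic facts about divisors a of ℓ
  have hA : ∀ a ∈ ℓ.divisors, a ∣ ℓ ∧ 0 < a ∧ ¬ q ∣ a := by
    intro a ha
    rw [Nat.mem_divisors] at ha
    refine ⟨ha.1, Nat.pos_of_dvd_of_pos ha.1 hℓ, fun hd => hql (hd.trans ha.1)⟩
  set A : ℕ → ℕ → MvPolynomial ℕ ℚ :=
    fun a j => (MvPolynomial.X (q ^ j * a)) ^ (ℓ / a * q ^ (k - j)) with hAdef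
  -- LHS
  have hLHS : ∑ d ∈ (ℓ * q ^ k).divisors,
        (MvPolynomial.C
            ((Nat.totient (q ^ (d.factorization q)) : ℚ) *
              (moebius (d / q ^ (d.factorization q)) : ℚ)) : MvPolynomial ℕ ℚ) *
          (MvPolynomial.X d) ^ ((ℓ * q ^ k) / d)
      = ∑ a ∈ ℓ.divisors, MvPolynomial.C ((moebius a : ℚ)) *
          ∑ j ∈ range (k + 1),
            MvPolynomial.C ((q : ℚ) ^ j - if j = 0 then 0 else (q : ℚ) ^ (j - 1)) * A a j := by
    rw [sum_divisors_coprime_mul_s17 hℓ0 (pow_ne_zero k hq0.ne') (hcop k)]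
    refine Finset.sum_congr rfl (fun a ha => ?_)
    obtain ⟨hdvd, ha0, hnd⟩ := hA a ha
    rw [Finset.mul_sum, Nat.sum_divisors_prime_pow hq]
    refine Finset.sum_congr rfl (fun j hj => ?_)
    have hjk : j ≤ k := by simpa using Nat.lt_succ_iff.mp (Finset.mem_range.mp hj)
    have hfact : (a * q ^ j).factorization q = j := by
      rw [Nat.factorization_mul ha0.ne' (pow_ne_zero j hq0.ne'), Finsupp.add_apply,
        Nat.factorization_eq_zero_of_not_dvd hnd, hq.factorization_pow, Finsupp.single_eq_same,
        zero_add]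
    have hdivq : a * q ^ j / q ^ j = a := Nat.mul_div_cancel _ (by positivity)
    have hexp : ℓ * q ^ k / (a * q ^ j) = ℓ / a * q ^ (k - j) :=
      exp_helper hdvd ha0 hq0 hjk
    rw [hfact, hdivq, hexp, hAdef]
    have htot : (Nat.totient (q ^ j) : ℚ) = (q : ℚ) ^ j - if j = 0 then 0 else (q : ℚ) ^ (j - 1) := by
      cases j with
      | zero => simp
      | succ t =>
        rw [Nat.totient_prime_pow hq (Nat.succ_pos t), if_neg (Nat.succ_ne_zero t),
          Nat.cast_mul, Nat.cast_pow, Nat.cast_sub hq.one_lt.le, Nat.cast_one,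
          Nat.add_sub_cancel]
        simp only [Nat.succ_sub_one]
        ring
    rw [htot, mul_comm a (q ^ j), map_mul]
    ring
  rw [hLHS]
  -- RHS
  have hRHS : ∀ r ∈ range (k + 1),
      (MvPolynomial.C ((q : ℚ) ^ r) : MvPolynomial ℕ ℚ) *
        ∑ e ∈ (ℓ * q ^ (k - r)).divisors,
          MvPolynomial.C ((moebius e : ℚ)) *
            (MvPolynomial.X (q ^ r * e)) ^ ((ℓ * q ^ (k - r)) / e)
      = ∑ a ∈ ℓ.divisors, MvPolynomial.C ((moebius a : ℚ)) *
          (MvPolynomial.C ((q : ℚ) ^ r) * A a r -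
            if r < k then MvPolynomial.C ((q : ℚ) ^ r) * A a (r + 1) else 0) := by
    intro r hr
    have hrk : r ≤ k := Nat.lt_succ_iff.mp (Finset.mem_range.mp hr)
    rw [sum_divisors_coprime_mul_s17 hℓ0 (pow_ne_zero _ hq0.ne') (hcop (k - r)), Finset.mul_sum]
    refine Finset.sum_congr rfl (fun a ha => ?_)
    obtain ⟨hdvd, ha0, hnd⟩ := hA a ha
    have hcopa : ∀ i : ℕ, Nat.Coprime a (q ^ i) :=
      fun i => ((Nat.Prime.coprime_iff_not_dvd hq).mpr hnd).symm.pow_right i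
    set g : ℕ → MvPolynomial ℕ ℚ := fun i =>
      MvPolynomial.C ((moebius (a * q ^ i) : ℚ)) *
        (MvPolynomial.X (q ^ r * (a * q ^ i))) ^ ((ℓ * q ^ (k - r)) / (a * q ^ i)) with hgdef
    have hmob : ∀ i : ℕ, moebius (a * q ^ i) = moebius a * moebius (q ^ i) :=
      fun i => isMultiplicative_moebius.map_mul_of_coprime (hcopa i)
    have hg2 : ∀ i, 2 ≤ i → g i = 0 := by
      intro i hi
      have : moebius (q ^ i) = 0 := by
        rw [moebius_apply_prime_pow hq (by omega)]
        rw [if_neg (by omega)]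
      simp [hgdef, hmob i, this]
    have hs' : ∑ i ∈ range (k - r + 1),
        (MvPolynomial.C ((moebius (a * q ^ i) : ℚ)) : MvPolynomial ℕ ℚ) *
          (MvPolynomial.X (q ^ r * (a * q ^ i))) ^ ((ℓ * q ^ (k - r)) / (a * q ^ i))
        = g 0 + (if 1 ≤ k - r then g 1 else 0) := sum_range_two_support g hg2 (k - r)
    rw [Nat.sum_divisors_prime_pow hq, hs']
    have hg0 : g 0 = MvPolynomial.C ((moebius a : ℚ)) * A a r := by
      have he : ℓ * q ^ (k - r) / a = ℓ / a * q ^ (k - r) := by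
        have h := exp_helper (ℓ := ℓ) (q := q) (s := k - r) (j := 0) hdvd ha0 hq0 (Nat.zero_le _)
        rwa [pow_zero, mul_one] at h
      simp only [hgdef, pow_zero, mul_one, hAdef]
      rw [he]
    have key : C ((q:ℚ)^r) * (g 0 + (if 1 ≤ k - r then g 1 else 0))
        = MvPolynomial.C ((moebius a : ℚ)) *
          (MvPolynomial.C ((q : ℚ) ^ r) * A a r -
            if r < k then MvPolynomial.C ((q : ℚ) ^ r) * A a (r + 1) else 0) := by
      by_cases hlt : r < k
      · have h1k : 1 ≤ k - r := by omega
        have hg1 : g 1 = - (MvPolynomial.C ((moebius a : ℚ)) * A a (r + 1)) := by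
          simp only [hgdef, pow_one, hAdef]
          have hmq : (moebius (a * q) : ℚ) = - (moebius a : ℚ) := by
            have := hmob 1
            rw [pow_one] at this
            rw [this, moebius_apply_prime hq]
            push_cast
            ring
          have hidx : q ^ r * (a * q) = q ^ (r + 1) * a := by ring
          have hexp1 : ℓ * q ^ (k - r) / (a * q) = ℓ / a * q ^ (k - (r + 1)) := by
            have := exp_helper (ℓ := ℓ) (q := q) (s := k - r) (j := 1) hdvd ha0 hq0 h1k
            rw [pow_one] at this
            rw [this, Nat.sub_sub]
          rw [hmq, hidx, hexp1, map_neg]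
          ring
        rw [if_pos h1k, if_pos hlt, hg0, hg1]
        ring
      · have h1k : ¬ (1 ≤ k - r) := by omega
        rw [if_neg h1k, if_neg hlt, hg0]
        ring
    rw [key]
  rw [Finset.sum_congr rfl hRHS, Finset.sum_comm]
  refine Finset.sum_congr rfl (fun a ha => ?_)
  rw [← Finset.mul_sum]
  congr 1
  -- telescoping
  rw [Finset.sum_sub_distrib]
  have h2 : ∑ r ∈ range (k + 1), (if r < k then MvPolynomial.C ((q : ℚ) ^ r) * A a (r + 1) else 0)
      = ∑ r ∈ range k, MvPolynomial.C ((q : ℚ) ^ r) * A a (r + 1) := by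
    rw [Finset.sum_range_succ, if_neg (lt_irrefl k), add_zero]
    exact Finset.sum_congr rfl (fun r hr => if_pos (Finset.mem_range.mp hr))
  rw [h2]
  have h3 : ∑ j ∈ range (k + 1),
      MvPolynomial.C ((q : ℚ) ^ j - if j = 0 then 0 else (q : ℚ) ^ (j - 1)) * A a j
      = ∑ j ∈ range (k + 1), MvPolynomial.C ((q : ℚ) ^ j) * A a j
        - ∑ j ∈ range (k + 1),
            MvPolynomial.C (if j = 0 then 0 else (q : ℚ) ^ (j - 1)) * A a j := by
    rw [← Finset.sum_sub_distrib]
    refine Finset.sum_congr rfl (fun j hj => ?_)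
    rw [map_sub]
    ring
  rw [h3]
  congr 1
  rw [Finset.sum_range_succ']
  simp
end
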